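/- Let n ≥ 2 and let u ∈ C²(ℝⁿ₊) satisfy div(yₙ^{2−n} ∇u) = 0 in ℝⁿ₊. Then for every x ∈ ∂ℝⁿ₊ and λ > 0, the logarithmic Kelvin transform v(y) = u(x + λ²(y−x)/|y−x|²) + ln(λ/|y−x|) also satisfies div(yₙ^{2−n} ∇v) = 0 in ℝⁿ₊. -/

import Mathlib

open Real Filter

/-- Partial derivative of `u` in the `i`-th coordinate direction. -/
noncomputable def partialD {n : ℕ} (i : Fin n) (u : EuclideanSpace ℝ (Fin n) → ℝ)
    (y : EuclideanSpace ℝ (Fin n)) : ℝ :=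
  fderiv ℝ u y (EuclideanSpace.single i 1)

/-- The Laplacian of `u`, as a sum of repeated partial derivatives. -/
noncomputable def lapl {n : ℕ} (u : EuclideanSpace ℝ (Fin n) → ℝ)
    (y : EuclideanSpace ℝ (Fin n)) : ℝ :=
  ∑ j, partialD j (fun z => partialD j u z) y

/-- The weighted operator `div(yᵢ^a ∇u) = yᵢ^a Δu + a yᵢ^(a-1) ∂u/∂yᵢ`,
where `i` plays the role of the last coordinate. -/
noncomputable def divA {n : ℕ} (i : Fin n) (a : ℝ) (u : EuclideanSpace ℝ (Fin n) → ℝ)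
    (y : EuclideanSpace ℝ (Fin n)) : ℝ :=
  (y i) ^ a * lapl u y + a * (y i) ^ (a - 1) * partialD i u y

/-- The inversion `y ↦ x + λ²(y-x)/|y-x|²` centered at `x` with radius `λ`. -/
noncomputable def inversion {n : ℕ} (x : EuclideanSpace ℝ (Fin n)) (lam : ℝ)
    (y : EuclideanSpace ℝ (Fin n)) : EuclideanSpace ℝ (Fin n) :=
  x + (lam ^ 2 / ‖y - x‖ ^ 2) • (y - x)

/-- The Kelvin-type transform `u_{x,λ}(y) = (λ/|y-x|)^(n-2+a) u(x + λ²(y-x)/|y-x|²)`. -/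
noncomputable def kelvin {n : ℕ} (a : ℝ) (x : EuclideanSpace ℝ (Fin n)) (lam : ℝ)
    (u : EuclideanSpace ℝ (Fin n) → ℝ) (y : EuclideanSpace ℝ (Fin n)) : ℝ :=
  (lam / ‖y - x‖) ^ ((n : ℝ) - 2 + a) * u (inversion x lam y)

open scoped RealInnerProductSpace

/-- The "matrix entry column" of the differential of the inversion: `mvec x lam j q` is the
image of the `j`-th basis vector under the differential of `inversion x lam` at `q`. -/
noncomputable def mvec {n : ℕ} (x : EuclideanSpace ℝ (Fin n)) (lam : ℝ) (j : Fin n)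
    (q : EuclideanSpace ℝ (Fin n)) : EuclideanSpace ℝ (Fin n) :=
  (lam^2 * (‖q - x‖^2)⁻¹) • EuclideanSpace.single j 1
    + (-2*lam^2*((‖q - x‖^2)^2)⁻¹*(q j - x j)) • (q - x)

lemma euclid_sum_single {n : ℕ} (w : EuclideanSpace ℝ (Fin n)) :
    ∑ j, w j • EuclideanSpace.single j (1:ℝ) = w := by
  have := (EuclideanSpace.basisFun (Fin n) ℝ).sum_repr w
  simpa [EuclideanSpace.basisFun_apply, EuclideanSpace.basisFun_repr] using this

lemma clm_sum_eval {n : ℕ} (T : EuclideanSpace ℝ (Fin n) →L[ℝ] ℝ)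
    (w : EuclideanSpace ℝ (Fin n)) :
    ∑ j, w j * T (EuclideanSpace.single j 1) = T w := by
  conv_rhs => rw [← euclid_sum_single w]
  rw [map_sum]; simp [smul_eq_mul]

lemma hasFDerivAt_normsq {n : ℕ} (x p : EuclideanSpace ℝ (Fin n)) :
    HasFDerivAt (fun q => ‖q - x‖^2) ((2:ℝ) • (innerSL ℝ (p - x))) p := by
  have h1 : HasFDerivAt (fun q : EuclideanSpace ℝ (Fin n) => q - x)
      (ContinuousLinearMap.id ℝ _) p := (hasFDerivAt_id p).sub_const x
  have h2 := h1.inner ℝ h1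
  have hfe : (fun q : EuclideanSpace ℝ (Fin n) => ⟪q - x, q - x⟫) = fun q => ‖q - x‖^2 :=
    funext fun q => real_inner_self_eq_norm_sq _
  rw [hfe] at h2
  refine h2.congr_fderiv ?_
  ext h
  simp only [ContinuousLinearMap.smul_apply, innerSL_apply_apply, fderivInnerCLM_apply,
    ContinuousLinearMap.comp_apply, ContinuousLinearMap.prod_apply, ContinuousLinearMap.id_apply,
    smul_eq_mul]
  rw [real_inner_comm]; ring

lemma inversion_hasFDerivAt {n : ℕ} (x : EuclideanSpace ℝ (Fin n)) (lam : ℝ)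
    (p : EuclideanSpace ℝ (Fin n)) (hp : p ≠ x) :
    ∃ M : EuclideanSpace ℝ (Fin n) →L[ℝ] EuclideanSpace ℝ (Fin n),
      HasFDerivAt (inversion x lam) M p ∧
      ∀ h, M h = (lam^2 * (‖p - x‖^2)⁻¹) • h
        + (-2*lam^2*((‖p - x‖^2)^2)⁻¹ * ⟪p - x, h⟫) • (p - x) := by
  have r0 : ‖p - x‖^2 ≠ 0 := by
    have : ‖p - x‖ ≠ 0 := by simpa [sub_eq_zero] using hp
    positivity
  have hρ := hasFDerivAt_normsq x p
  have hinv : HasFDerivAt (fun q => (‖q - x‖^2)⁻¹)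
      ((-((‖p - x‖^2) ^ 2)⁻¹) • ((2:ℝ) • innerSL ℝ (p - x))) p :=
    (hasDerivAt_inv r0).comp_hasFDerivAt p hρ
  have hs := hinv.const_mul (lam^2)
  have hw : HasFDerivAt (fun q : EuclideanSpace ℝ (Fin n) => q - x)
      (ContinuousLinearMap.id ℝ _) p := (hasFDerivAt_id p).sub_const x
  have hsm := (hs.smul hw).const_add x
  have hfun : inversion x lam = fun q => x + (lam^2 * (‖q - x‖^2)⁻¹) • (q - x) := by
    funext q; rw [inversion, div_eq_mul_inv]
  rw [hfun]
  refine ⟨_, hsm, fun h => ?_⟩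
  simp only [ContinuousLinearMap.add_apply, ContinuousLinearMap.smul_apply,
    ContinuousLinearMap.smulRight_apply, ContinuousLinearMap.id_apply, innerSL_apply_apply,
    smul_eq_mul, neg_smul, neg_mul, Pi.smul_apply, Pi.neg_apply, ContinuousLinearMap.neg_apply]
  module

lemma vderiv {n : ℕ} (x : EuclideanSpace ℝ (Fin n)) (lam : ℝ) (hlam : 0 < lam)
    (u : EuclideanSpace ℝ (Fin n) → ℝ) (p : EuclideanSpace ℝ (Fin n)) (hp : p ≠ x)
    (hdu : DifferentiableAt ℝ u (inversion x lam p)) :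
    ∃ D : EuclideanSpace ℝ (Fin n) →L[ℝ] ℝ,
      HasFDerivAt (fun z => u (inversion x lam z) + Real.log (lam / ‖z - x‖)) D p ∧
      ∀ j, D (EuclideanSpace.single j 1) =
        fderiv ℝ u (inversion x lam p) (mvec x lam j p) - (‖p - x‖^2)⁻¹ * (p j - x j) := by
  have hnx : ‖p - x‖ ≠ 0 := by simpa [sub_eq_zero] using hp
  have r0 : ‖p - x‖^2 ≠ 0 := by positivity
  obtain ⟨M, hM, hMev⟩ := inversion_hasFDerivAt x lam p hp
  have h1 : HasFDerivAt (fun q => u (inversion x lam q))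
      ((fderiv ℝ u (inversion x lam p)).comp M) p := hdu.hasFDerivAt.comp p hM
  have hρ := hasFDerivAt_normsq x p
  have hlog := (hρ.log r0).const_mul (2⁻¹ : ℝ)
  have h2 := hlog.const_sub (Real.log lam)
  have hvt := h1.add h2
  have hev : (fun z => u (inversion x lam z) + Real.log (lam / ‖z - x‖))
      =ᶠ[nhds p] (fun q => u (inversion x lam q)
        + (Real.log lam - 2⁻¹ * Real.log (‖q - x‖^2))) := by
    filter_upwards [eventually_ne_nhds hp] with q hq
    have hq0 : ‖q - x‖ ≠ 0 := by simpa [sub_eq_zero] using hq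
    rw [Real.log_div (ne_of_gt hlam) hq0, Real.log_pow]
    push_cast; ring
  refine ⟨_, hvt.congr_of_eventuallyEq hev, fun j => ?_⟩
  have hinner : ⟪p - x, EuclideanSpace.single j (1:ℝ)⟫ = p j - x j := by
    simp [EuclideanSpace.inner_single_right]
  simp only [ContinuousLinearMap.add_apply, ContinuousLinearMap.comp_apply,
    ContinuousLinearMap.neg_apply, ContinuousLinearMap.smul_apply, innerSL_apply_apply,
    smul_eq_mul, hMev, hinner, mvec]
  ring_nf

lemma pderiv {n : ℕ} (x : EuclideanSpace ℝ (Fin n)) (lam : ℝ)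
    (u : EuclideanSpace ℝ (Fin n) → ℝ) (y : EuclideanSpace ℝ (Fin n)) (hy : y ≠ x)
    (hdF : DifferentiableAt ℝ (fderiv ℝ u) (inversion x lam y)) (j : Fin n) :
    ∃ D : EuclideanSpace ℝ (Fin n) →L[ℝ] ℝ,
      HasFDerivAt (fun q => (fderiv ℝ u (inversion x lam q)) (mvec x lam j q)
        - (‖q - x‖^2)⁻¹ * (q j - x j)) D y ∧
      D (EuclideanSpace.single j 1) =
        fderiv ℝ (fderiv ℝ u) (inversion x lam y) (mvec x lam j y) (mvec x lam j y)
        + (-4*lam^2*((‖y - x‖^2)^2)⁻¹*(y j - x j))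
            * fderiv ℝ u (inversion x lam y) (EuclideanSpace.single j 1)
        + (8*lam^2*((‖y - x‖^2)^3)⁻¹*(y j - x j)^2 - 2*lam^2*((‖y - x‖^2)^2)⁻¹)
            * fderiv ℝ u (inversion x lam y) (y - x)
        + (2*((‖y - x‖^2)^2)⁻¹*(y j - x j)^2 - (‖y - x‖^2)⁻¹) := by
  have hnx : ‖y - x‖ ≠ 0 := by simpa [sub_eq_zero] using hy
  have r0 : ‖y - x‖^2 ≠ 0 := by positivity
  obtain ⟨M, hM, hMev⟩ := inversion_hasFDerivAt x lam y hy
  have hρ := hasFDerivAt_normsq x y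
  have hinvρ : HasFDerivAt (fun q => (‖q - x‖^2)⁻¹)
      ((-((‖y - x‖^2) ^ 2)⁻¹) • ((2:ℝ) • innerSL ℝ (y - x))) y :=
    (hasDerivAt_inv r0).comp_hasFDerivAt y hρ
  have hα := hinvρ.const_mul (lam^2)
  have hcoord : HasFDerivAt (fun q : EuclideanSpace ℝ (Fin n) => q j - x j)
      (EuclideanSpace.proj j : EuclideanSpace ℝ (Fin n) →L[ℝ] ℝ) y := by
    have h := (EuclideanSpace.proj j : EuclideanSpace ℝ (Fin n) →L[ℝ] ℝ).hasFDerivAt (x := y)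
    exact h.sub_const (x j)
  have hsq := ((hasDerivAt_pow 2 (‖y - x‖^2)).inv (pow_ne_zero 2 r0)).comp_hasFDerivAt y hρ
  have hb1 := hsq.const_mul (-2*lam^2)
  have hβ := hb1.mul hcoord
  have hwv : HasFDerivAt (fun q : EuclideanSpace ℝ (Fin n) => q - x)
      (ContinuousLinearMap.id ℝ _) y := (hasFDerivAt_id y).sub_const x
  have hA := hα.smul (hasFDerivAt_const (EuclideanSpace.single j (1:ℝ)) y)
  have hB := hβ.smul hwv
  have hN := hA.add hB
  have hFcomp : HasFDerivAt (fun q => fderiv ℝ u (inversion x lam q))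
      ((fderiv ℝ (fderiv ℝ u) (inversion x lam y)).comp M) y := hdF.hasFDerivAt.comp y hM
  have happ := hFcomp.clm_apply hN
  have hsc := hinvρ.mul hcoord
  have htot := happ.sub hsc
  refine ⟨_, htot, ?_⟩
  have hinner : ⟪y - x, EuclideanSpace.single j (1:ℝ)⟫ = y j - x j := by
    simp [EuclideanSpace.inner_single_right]
  have hproj : (EuclideanSpace.proj j : EuclideanSpace ℝ (Fin n) →L[ℝ] ℝ)
      (EuclideanSpace.single j (1:ℝ)) = 1 := by simp
  simp only [ContinuousLinearMap.add_apply, ContinuousLinearMap.sub_apply,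
    ContinuousLinearMap.comp_apply, ContinuousLinearMap.flip_apply,
    ContinuousLinearMap.smul_apply, ContinuousLinearMap.smulRight_apply,
    ContinuousLinearMap.neg_apply, ContinuousLinearMap.id_apply, Function.comp,
    ContinuousLinearMap.zero_apply, innerSL_apply_apply, Pi.smul_apply, Pi.neg_apply,
    smul_eq_mul, hMev, hinner, hproj, mvec, smul_zero, mul_zero, zero_add]
  simp only [map_add, map_smul, ContinuousLinearMap.add_apply, ContinuousLinearMap.smul_apply,
    smul_eq_mul, Pi.inv_apply, Pi.mul_apply, Pi.add_apply, Pi.smul_apply']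
  field_simp
  ring

set_option maxHeartbeats 2000000 in
/-- **Invariance for the logarithmic Kelvin transform (`a = 2-n`).** If `u ∈ C²(ℝⁿ₊)`
satisfies `div(yₙ^(2-n) ∇u) = 0` in `ℝⁿ₊`, then for every `x ∈ ∂ℝⁿ₊` and `λ > 0` the
function `v(y) = u(x + λ²(y-x)/|y-x|²) + ln(λ/|y-x|)` satisfies the same equation. -/
theorem log_kelvin_invariance (n : ℕ) (hn : 2 ≤ n) (i : Fin n) (hi : (i : ℕ) = n - 1)
    (u : EuclideanSpace ℝ (Fin n) → ℝ)
    (hu : ContDiffOn ℝ 2 u {y | 0 < y i})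
    (heq : ∀ y, 0 < y i → divA i (2 - (n : ℝ)) u y = 0)
    (x : EuclideanSpace ℝ (Fin n)) (hx : x i = 0) (lam : ℝ) (hlam : 0 < lam) :
    ∀ y : EuclideanSpace ℝ (Fin n), 0 < y i →
      divA i (2 - (n : ℝ))
        (fun z => u (inversion x lam z) + Real.log (lam / ‖z - x‖)) y = 0 := by
  intro y hy
  classical
  -- the open half space
  have hΩ : IsOpen {p : EuclideanSpace ℝ (Fin n) | 0 < p i} :=
    isOpen_lt continuous_const (EuclideanSpace.proj i).continuous
  have hnex : ∀ p : EuclideanSpace ℝ (Fin n), 0 < p i → p ≠ x := by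
    intro p hp hpx; rw [hpx, hx] at hp; exact lt_irrefl 0 hp
  have hrpos : ∀ p : EuclideanSpace ℝ (Fin n), 0 < p i → (0:ℝ) < ‖p - x‖^2 := by
    intro p hp
    have : p - x ≠ 0 := sub_ne_zero_of_ne (hnex p hp)
    have := norm_pos_iff.mpr this
    positivity
  -- value of inversion coordinate
  have hinvi : ∀ p : EuclideanSpace ℝ (Fin n), (inversion x lam p) i
      = x i + (lam ^ 2 / ‖p - x‖ ^ 2) * (p i - x i) := fun p => rfl
  have hinvΩ : ∀ p : EuclideanSpace ℝ (Fin n), 0 < p i → 0 < (inversion x lam p) i := by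
    intro p hp
    rw [hinvi, hx, sub_zero, zero_add]
    exact mul_pos (div_pos (by positivity) (hrpos p hp)) hp
  -- differentiability data
  have hCD : ∀ p : EuclideanSpace ℝ (Fin n), 0 < p i → ContDiffAt ℝ 2 u (inversion x lam p) := by
    intro p hp
    exact hu.contDiffAt (hΩ.mem_nhds (hinvΩ p hp))
  have hdu : ∀ p : EuclideanSpace ℝ (Fin n), 0 < p i → DifferentiableAt ℝ u (inversion x lam p) := by
    intro p hp
    exact (hCD p hp).differentiableAt (by norm_num)
  -- first derivative formula valid on the half space
  have hpd : ∀ p : EuclideanSpace ℝ (Fin n), 0 < p i → ∀ j,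
      partialD j (fun z => u (inversion x lam z) + Real.log (lam / ‖z - x‖)) p
        = fderiv ℝ u (inversion x lam p) (mvec x lam j p) - (‖p - x‖^2)⁻¹ * (p j - x j) := by
    intro p hp j
    obtain ⟨D, hD, hDev⟩ := vderiv x lam hlam u p (hnex p hp) (hdu p hp)
    rw [partialD, hD.fderiv]
    exact hDev j
  -- data at the point y
  set z := inversion x lam y with hzdef
  have hzΩ : 0 < z i := hinvΩ y hy
  have hdF : DifferentiableAt ℝ (fderiv ℝ u) z :=
    ((hCD y hy).fderiv_right (m := 1) (by norm_num)).differentiableAt (by norm_num)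
  have hyne : y ≠ x := hnex y hy
  have hnx : ‖y - x‖ ≠ 0 := by simpa [sub_eq_zero] using hyne
  have r0 : (0:ℝ) < ‖y - x‖^2 := hrpos y hy
  -- second partial derivatives of v
  have key : ∀ j : Fin n,
      partialD j (fun p => partialD j
          (fun z => u (inversion x lam z) + Real.log (lam / ‖z - x‖)) p) y
        = fderiv ℝ (fderiv ℝ u) z (mvec x lam j y) (mvec x lam j y)
        + (-4*lam^2*((‖y - x‖^2)^2)⁻¹*(y j - x j))
            * fderiv ℝ u z (EuclideanSpace.single j 1)
        + (8*lam^2*((‖y - x‖^2)^3)⁻¹*(y j - x j)^2 - 2*lam^2*((‖y - x‖^2)^2)⁻¹)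
            * fderiv ℝ u z (y - x)
        + (2*((‖y - x‖^2)^2)⁻¹*(y j - x j)^2 - (‖y - x‖^2)⁻¹) := by
    intro j
    obtain ⟨D, hD, hDev⟩ := pderiv x lam u y hyne hdF j
    have hev : (fun p => partialD j
        (fun z => u (inversion x lam z) + Real.log (lam / ‖z - x‖)) p)
        =ᶠ[nhds y] (fun q => (fderiv ℝ u (inversion x lam q)) (mvec x lam j q)
          - (‖q - x‖^2)⁻¹ * (q j - x j)) := by
      filter_upwards [hΩ.mem_nhds hy] with p hp
      exact hpd p hp j
    rw [partialD, hev.fderiv_eq, hD.fderiv]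
    exact hDev
  -- second partials of u expressed via the second fderiv
  have hjz : ∀ j : Fin n, partialD j (fun p => partialD j u p) z
      = fderiv ℝ (fderiv ℝ u) z (EuclideanSpace.single j 1) (EuclideanSpace.single j 1) := by
    intro j
    have h := hdF.hasFDerivAt.clm_apply
      (hasFDerivAt_const (EuclideanSpace.single j (1:ℝ)) z)
    simp only [partialD]
    rw [h.fderiv]
    simp
  -- sum identities
  have hsub : ∀ j : Fin n, (y - x) j = y j - x j := fun j => rfl
  have hSE : ∑ j, fderiv ℝ (fderiv ℝ u) z (EuclideanSpace.single j 1) (EuclideanSpace.single j 1)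
      = lapl u z := by
    rw [lapl]; exact Finset.sum_congr rfl fun j _ => (hjz j).symm
  have hSX : ∑ j, (y j - x j) * fderiv ℝ (fderiv ℝ u) z (EuclideanSpace.single j 1) (y - x)
      = fderiv ℝ (fderiv ℝ u) z (y - x) (y - x) := by
    have h := clm_sum_eval ((fderiv ℝ (fderiv ℝ u) z).flip (y - x)) (y - x)
    simp only [ContinuousLinearMap.flip_apply, hsub] at h
    exact h
  have hSY : ∑ j, (y j - x j) * fderiv ℝ (fderiv ℝ u) z (y - x) (EuclideanSpace.single j 1)
      = fderiv ℝ (fderiv ℝ u) z (y - x) (y - x) := by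
    have h := clm_sum_eval (fderiv ℝ (fderiv ℝ u) z (y - x)) (y - x)
    simp only [hsub] at h
    exact h
  have hSA : ∑ j, (y j - x j) * fderiv ℝ u z (EuclideanSpace.single j 1)
      = fderiv ℝ u z (y - x) := by
    have h := clm_sum_eval (fderiv ℝ u z) (y - x)
    simp only [hsub] at h
    exact h
  have hSw : ∑ j, (y j - x j)^2 = ‖y - x‖^2 := by
    have h : ⟪y - x, y - x⟫ = ‖y - x‖^2 := real_inner_self_eq_norm_sq _
    rw [← h, PiLp.inner_apply]
    apply Finset.sum_congr rfl
    intro j _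
    simp [hsub, RCLike.inner_apply, sq]
  -- canonical form of the second partials
  have hterm : ∀ j : Fin n,
      partialD j (fun p => partialD j
          (fun z => u (inversion x lam z) + Real.log (lam / ‖z - x‖)) p) y
      = (lam^2*(‖y - x‖^2)⁻¹)^2
            * fderiv ℝ (fderiv ℝ u) z (EuclideanSpace.single j 1) (EuclideanSpace.single j 1)
        + (-2*lam^4*((‖y - x‖^2)^3)⁻¹)
            * ((y j - x j) * fderiv ℝ (fderiv ℝ u) z (EuclideanSpace.single j 1) (y - x))
        + (-2*lam^4*((‖y - x‖^2)^3)⁻¹)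
            * ((y j - x j) * fderiv ℝ (fderiv ℝ u) z (y - x) (EuclideanSpace.single j 1))
        + (4*lam^4*((‖y - x‖^2)^4)⁻¹ * fderiv ℝ (fderiv ℝ u) z (y - x) (y - x)
            + 8*lam^2*((‖y - x‖^2)^3)⁻¹ * fderiv ℝ u z (y - x)
            + 2*((‖y - x‖^2)^2)⁻¹) * ((y j - x j)^2)
        + (-4*lam^2*((‖y - x‖^2)^2)⁻¹)
            * ((y j - x j) * fderiv ℝ u z (EuclideanSpace.single j 1))
        + (-2*lam^2*((‖y - x‖^2)^2)⁻¹ * fderiv ℝ u z (y - x) - (‖y - x‖^2)⁻¹) := by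
    intro j
    rw [key j]
    simp only [mvec, map_add, map_smul, ContinuousLinearMap.add_apply,
      ContinuousLinearMap.smul_apply, smul_eq_mul]
    ring
  -- the Laplacian of the transformed function
  have hlapl : lapl (fun z => u (inversion x lam z) + Real.log (lam / ‖z - x‖)) y
      = (lam^2*(‖y - x‖^2)⁻¹)^2 * lapl u z
        + (-2*lam^4*((‖y - x‖^2)^3)⁻¹) * fderiv ℝ (fderiv ℝ u) z (y - x) (y - x)
        + (-2*lam^4*((‖y - x‖^2)^3)⁻¹) * fderiv ℝ (fderiv ℝ u) z (y - x) (y - x)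
        + (4*lam^4*((‖y - x‖^2)^4)⁻¹ * fderiv ℝ (fderiv ℝ u) z (y - x) (y - x)
            + 8*lam^2*((‖y - x‖^2)^3)⁻¹ * fderiv ℝ u z (y - x)
            + 2*((‖y - x‖^2)^2)⁻¹) * (‖y - x‖^2)
        + (-4*lam^2*((‖y - x‖^2)^2)⁻¹) * fderiv ℝ u z (y - x)
        + (n:ℝ) * (-2*lam^2*((‖y - x‖^2)^2)⁻¹ * fderiv ℝ u z (y - x) - (‖y - x‖^2)⁻¹) := by
    rw [lapl]
    rw [show (∑ j, partialD j (fun p => partialD j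
        (fun z => u (inversion x lam z) + Real.log (lam / ‖z - x‖)) p) y) = _ from
      Finset.sum_congr rfl fun j _ => hterm j]
    simp only [Finset.sum_add_distrib, ← Finset.mul_sum, Finset.sum_const, Finset.card_univ,
      Fintype.card_fin, nsmul_eq_mul]
    rw [hSE, hSX, hSY, hSA, hSw]
  -- the i-th partial of the transformed function
  have hpdi : partialD i (fun z => u (inversion x lam z) + Real.log (lam / ‖z - x‖)) y
      = (lam^2 * (‖y - x‖^2)⁻¹) * fderiv ℝ u z (EuclideanSpace.single i 1)
        + (-2*lam^2*((‖y - x‖^2)^2)⁻¹*(y i)) * fderiv ℝ u z (y - x)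
        - (‖y - x‖^2)⁻¹ * (y i) := by
    rw [hpd y hy i]
    simp only [mvec, map_add, map_smul, smul_eq_mul, hx, sub_zero, ← hzdef]
  -- the equation satisfied by u at z
  have hzi : z i = lam ^ 2 * (‖y - x‖ ^ 2)⁻¹ * y i := by
    rw [hzdef, hinvi, hx, sub_zero, zero_add, div_eq_mul_inv]
  have hzipos : 0 < z i := hzΩ
  have hyipos : 0 < y i := hy
  have h := heq z hzΩ
  rw [divA, Real.rpow_sub_one (ne_of_gt hzipos)] at h
  have hPz : (z i) ^ (2 - (n:ℝ)) ≠ 0 := ne_of_gt (Real.rpow_pos_of_pos hzipos _)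
  have hL : lapl u z * z i = -(2 - (n:ℝ)) * partialD i u z := by
    have h2 : (z i) ^ (2 - (n:ℝ)) *
        (lapl u z * z i + (2 - (n:ℝ)) * partialD i u z) = 0 := by
      field_simp at h
      linear_combination h
    rcases mul_eq_zero.mp h2 with h3 | h3
    · exact absurd h3 hPz
    · linarith
  -- final computation
  rw [divA, hlapl, hpdi, Real.rpow_sub_one (ne_of_gt hyipos)]
  have hB : partialD i u z = fderiv ℝ u z (EuclideanSpace.single i 1) := rfl
  rw [hB] at hL
  have hr0 : (‖y - x‖^2 : ℝ) ≠ 0 := ne_of_gt r0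
  have hyi0 : (y i : ℝ) ≠ 0 := ne_of_gt hyipos
  have hY : (y i : ℝ) ^ (2 - (n:ℝ)) ≠ 0 := ne_of_gt (Real.rpow_pos_of_pos hyipos _)
  -- eliminate lapl u z using hL (note z i = c * y i)
  have hLz : lapl u z = -(2 - (n:ℝ)) * fderiv ℝ u z (EuclideanSpace.single i 1)
      / (lam ^ 2 * (‖y - x‖ ^ 2)⁻¹ * y i) := by
    rw [← hzi]
    field_simp
    linear_combination hL
  rw [hLz]
  have hlam0 : (lam:ℝ) ≠ 0 := ne_of_gt hlam
  field_simp
  ring
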